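/- Let α be an irrational number not equivalent to (1+√5)/2, whose continued fraction expansion contains for infinitely many n the pattern a_{n−2} = a_{n−1} = 1, aₙ = 3, a_{n+1} = a_{n+2} = a_{n+3} = 1, a_{n+4} = 3. Then 𝔨(α) ≤ 4/((√21+1)/10 + (√21+4575)/1258) = 0.952692⁺; in particular 𝔨(α) < 164/(13√173). -/

import Mathlib

open Filter

/-- The tails `αₙ = [aₙ; aₙ₊₁, …]` of the continued fraction of `α`. -/
noncomputable def cfTail (α : ℝ) : ℕ → ℝ
  | 0 => α
  | n + 1 => (Int.fract (cfTail α n))⁻¹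

/-- The partial quotients `aₙ` of the continued fraction of `α`. -/
noncomputable def cfDigit (α : ℝ) (n : ℕ) : ℤ := ⌊cfTail α n⌋

/-- Value `[a; b, c, …]` of a finite continued fraction given by a list. -/
noncomputable def finCF : List ℤ → ℝ
  | [] => 0
  | a :: l => (a : ℝ) + (finCF l)⁻¹

/-- `α*ₙ = [0; aₙ, aₙ₋₁, …, a₁]`. -/
noncomputable def cfStar (α : ℝ) (n : ℕ) : ℝ :=
  (finCF (((List.range' 1 n).reverse).map (cfDigit α)))⁻¹

/-- Numerators `pₙ` of the convergents of `α`. -/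
noncomputable def cfNum (α : ℝ) : ℕ → ℤ
  | 0 => cfDigit α 0
  | 1 => cfDigit α 1 * cfDigit α 0 + 1
  | n + 2 => cfDigit α (n + 2) * cfNum α (n + 1) + cfNum α n

/-- Denominators `qₙ` of the convergents of `α`. -/
noncomputable def cfDen (α : ℝ) : ℕ → ℤ
  | 0 => 1
  | 1 => cfDigit α 1
  | n + 2 => cfDigit α (n + 2) * cfDen α (n + 1) + cfDen α n

/-- The irrationality measure function `ψ_α^[2]` for "second best" approximations. -/
noncomputable def psi2 (α : ℝ) (t : ℝ) : ℝ :=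
  sInf { x : ℝ | ∃ p q : ℤ, 1 ≤ q ∧ (q : ℝ) ≤ t ∧
    (∀ n : ℕ, (p, q) ≠ (cfNum α n, cfDen α n)) ∧ x = |(q : ℝ) * α - (p : ℝ)| }

/-- The Diophantine constant `𝔨(α) = liminf_{t → ∞} t · ψ_α^[2](t)`. -/
noncomputable def kConst (α : ℝ) : ℝ := liminf (fun t : ℝ => t * psi2 α t) atTop

/-- Two numbers are equivalent if the tails of their continued fraction expansions
coincide: `a_{n+k} = b_{m+k}` for all `k ≥ 1`, for some positive integers `m`, `n`. -/
def CFEquiv (α β : ℝ) : Prop :=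
  ∃ n m : ℕ, 0 < n ∧ 0 < m ∧ ∀ k : ℕ, 0 < k → cfDigit α (n + k) = cfDigit β (m + k)

/-- The spectrum `𝕃₂` of values of `𝔨`. -/
def L2 : Set ℝ := { l : ℝ | ∃ α : ℝ, Irrational α ∧ l = kConst α }

/-- `κ¹ₙ(α) = (1 + α*ₙ₋₁)(αₙ − 1)/(αₙ + α*ₙ₋₁)`. -/
noncomputable def kappa1 (α : ℝ) (n : ℕ) : ℝ :=
  (1 + cfStar α (n - 1)) * (cfTail α n - 1) / (cfTail α n + cfStar α (n - 1))

/-- `κ²ₙ(α) = (1 − α*ₙ)(αₙ₊₁ + 1)/(αₙ₊₁ + α*ₙ)`. -/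
noncomputable def kappa2 (α : ℝ) (n : ℕ) : ℝ :=
  (1 - cfStar α n) * (cfTail α (n + 1) + 1) / (cfTail α (n + 1) + cfStar α n)

/-- `κ⁴ₙ(α) = 4/(αₙ + α*ₙ₋₁)`. -/
noncomputable def kappa4 (α : ℝ) (n : ℕ) : ℝ :=
  4 / (cfTail α n + cfStar α (n - 1))

section Basics
variable {α : ℝ}

lemma tail_irrational (hα : Irrational α) : ∀ n, Irrational (cfTail α n)
  | 0 => hα
  | n + 1 => by
    have h := tail_irrational hα n
    have : Irrational (Int.fract (cfTail α n)) := by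
      rw [Int.fract]; exact h.sub_intCast _
    exact this.inv

lemma tail_succ_gt_one (hα : Irrational α) (n : ℕ) : 1 < cfTail α (n + 1) := by
  have h := tail_irrational hα n
  have h1 : Int.fract (cfTail α n) < 1 := Int.fract_lt_one _
  have h0 : 0 < Int.fract (cfTail α n) := by
    rcases lt_or_eq_of_le (Int.fract_nonneg (cfTail α n)) with h' | h'
    · exact h'
    · exfalso
      have hirr : Irrational (Int.fract (cfTail α n)) := by
        rw [Int.fract]; exact h.sub_intCast _
      rw [← h'] at hirr
      exact not_irrational_zero hirr
  show 1 < (Int.fract (cfTail α n))⁻¹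
  exact one_lt_inv_iff₀.mpr ⟨h0, h1⟩

lemma tail_pos (hα : Irrational α) (n : ℕ) : 0 < cfTail α (n + 1) :=
  lt_trans one_pos (tail_succ_gt_one hα n)

lemma tail_eq (n : ℕ) : cfTail α n = cfDigit α n + (cfTail α (n + 1))⁻¹ := by
  have h : cfTail α (n+1) = (Int.fract (cfTail α n))⁻¹ := rfl
  rw [h, inv_inv, cfDigit, Int.fract]
  ring

lemma digit_ge_one (hα : Irrational α) (n : ℕ) : 1 ≤ cfDigit α (n + 1) := by
  have h := tail_succ_gt_one hα n
  rw [cfDigit, Int.le_floor]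
  exact_mod_cast h.le

lemma digit_le_tail (n : ℕ) : (cfDigit α n : ℝ) ≤ cfTail α n := Int.floor_le _

lemma tail_lt_digit_add_one (n : ℕ) : cfTail α n < cfDigit α n + 1 := Int.lt_floor_add_one _

end Basics

section Dens
variable {α : ℝ}

lemma den_ge_one (hα : Irrational α) : ∀ n, 1 ≤ cfDen α n
  | 0 => le_refl 1
  | 1 => digit_ge_one hα 0
  | n + 2 => by
    have h1 := den_ge_one hα (n+1)
    have h0 := den_ge_one hα n
    have hd := digit_ge_one hα (n+1)
    show 1 ≤ cfDigit α (n + 2) * cfDen α (n + 1) + cfDen α n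
    nlinarith

lemma den_pos_real (hα : Irrational α) (n : ℕ) : (0:ℝ) < cfDen α n := by
  exact_mod_cast lt_of_lt_of_le zero_lt_one (by exact_mod_cast den_ge_one hα n)

lemma den_lt_succ (hα : Irrational α) (n : ℕ) : cfDen α (n + 1) < cfDen α (n + 2) := by
  have h1 := den_ge_one hα (n+1)
  have h0 := den_ge_one hα n
  have hd := digit_ge_one hα (n+1)
  show cfDen α (n+1) < cfDigit α (n + 2) * cfDen α (n + 1) + cfDen α n
  nlinarith

lemma den_le_succ (hα : Irrational α) : ∀ n, cfDen α n ≤ cfDen α (n + 1)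
  | 0 => digit_ge_one hα 0
  | n + 1 => (den_lt_succ hα n).le

lemma den_mono (hα : Irrational α) {m n : ℕ} (h : m ≤ n) : cfDen α m ≤ cfDen α n := by
  induction n with
  | zero => simp [Nat.le_zero.mp h]
  | succ k ih =>
    rcases Nat.lt_or_ge m (k+1) with h' | h'
    · exact le_trans (ih (Nat.lt_succ_iff.mp h')) (den_le_succ hα k)
    · have : m = k + 1 := le_antisymm h h'
      simp [this]

lemma den_ge_nat (hα : Irrational α) : ∀ n : ℕ, (n : ℤ) ≤ cfDen α n
  | 0 => le_trans zero_le_one (den_ge_one hα 0)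
  | 1 => by show ((1:ℕ):ℤ) ≤ cfDigit α 1; simpa using digit_ge_one hα 0
  | n + 2 => by
    have h1 := den_ge_nat hα (n+1)
    have h0 := den_ge_one hα n
    have hd := digit_ge_one hα (n+1)
    have h1' := den_ge_one hα (n+1)
    show ((n:ℤ) + 2) ≤ cfDigit α (n + 2) * cfDen α (n + 1) + cfDen α n
    push_cast at h1
    nlinarith

lemma det_eq (n : ℕ) :
    cfNum α (n+1) * cfDen α n - cfNum α n * cfDen α (n+1) = (-1)^n := by
  induction n with
  | zero => show (cfDigit α 1 * cfDigit α 0 + 1) * 1 - cfDigit α 0 * cfDigit α 1 = 1; ring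
  | succ k ih =>
    show (cfDigit α (k+2) * cfNum α (k+1) + cfNum α k) * cfDen α (k+1)
        - cfNum α (k+1) * (cfDigit α (k+2) * cfDen α (k+1) + cfDen α k) = (-1)^(k+1)
    have : (cfDigit α (k+2) * cfNum α (k+1) + cfNum α k) * cfDen α (k+1)
        - cfNum α (k+1) * (cfDigit α (k+2) * cfDen α (k+1) + cfDen α k)
        = -(cfNum α (k+1) * cfDen α k - cfNum α k * cfDen α (k+1)) := by ring
    rw [this, ih]
    ring

end Dens

section ConvId
variable {α : ℝ}

/-- `dd α n = τ_{n+2} q_{n+1} + q_n`, the denominator controlling `|q_{n+1} α - p_{n+1}|`. -/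
noncomputable def dd (α : ℝ) (n : ℕ) : ℝ :=
  cfTail α (n+2) * (cfDen α (n+1) : ℝ) + (cfDen α n : ℝ)

lemma dd_pos (hα : Irrational α) (n : ℕ) : 0 < dd α n := by
  have h1 := den_pos_real hα (n+1)
  have h0 := den_pos_real hα n
  have ht := tail_pos hα (n+1)
  unfold dd
  nlinarith

lemma tail_rel (hα : Irrational α) (n : ℕ) :
    (cfTail α (n+1) - (cfDigit α (n+1) : ℝ)) * cfTail α (n+2) = 1 := by
  have h := tail_eq (α := α) (n+1)
  have h2 : cfTail α (n+2) ≠ 0 := (tail_pos hα (n+1)).ne'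
  have h3 : cfTail α (n+1) - (cfDigit α (n+1) : ℝ) = (cfTail α (n+2))⁻¹ := by
    linear_combination h
  rw [h3]
  exact inv_mul_cancel₀ h2

lemma tail_rel0 (hα : Irrational α) :
    (α - (cfDigit α 0 : ℝ)) * cfTail α 1 = 1 := by
  have h : cfTail α 0 = (cfDigit α 0 : ℝ) + (cfTail α 1)⁻¹ := tail_eq 0
  have h0 : α = (cfDigit α 0 : ℝ) + (cfTail α 1)⁻¹ := h
  have h2 : cfTail α 1 ≠ 0 := (tail_pos hα 0).ne'
  have h3 : α - (cfDigit α 0 : ℝ) = (cfTail α 1)⁻¹ := by linear_combination h0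
  rw [h3]
  exact inv_mul_cancel₀ h2

lemma conv_id (hα : Irrational α) : ∀ n : ℕ,
    α * dd α n = cfTail α (n+2) * (cfNum α (n+1) : ℝ) + (cfNum α n : ℝ)
  | 0 => by
    have e0 := tail_rel0 hα
    have R := tail_rel hα 0
    unfold dd
    rw [show cfDen α 1 = cfDigit α 1 from rfl, show cfDen α 0 = (1:ℤ) from rfl,
      show cfNum α 1 = cfDigit α 1 * cfDigit α 0 + 1 from rfl,
      show cfNum α 0 = cfDigit α 0 from rfl]
    push_cast
    linear_combination (cfTail α 2) * e0 - (α - (cfDigit α 0 : ℝ)) * R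
  | n + 1 => by
    have H := conv_id hα n
    have R := tail_rel hα (n+1)
    have hq : (cfDen α (n+2) : ℝ) = (cfDigit α (n+2) : ℝ) * (cfDen α (n+1) : ℝ) + (cfDen α n : ℝ) := by
      rw [show cfDen α (n+2) = cfDigit α (n + 2) * cfDen α (n + 1) + cfDen α n from rfl]
      push_cast; ring
    have hp : (cfNum α (n+2) : ℝ) = (cfDigit α (n+2) : ℝ) * (cfNum α (n+1) : ℝ) + (cfNum α n : ℝ) := by
      rw [show cfNum α (n+2) = cfDigit α (n + 2) * cfNum α (n + 1) + cfNum α n from rfl]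
      push_cast; ring
    unfold dd at H ⊢
    rw [hq, hp]
    linear_combination (cfTail α (n+3)) * H
      - (α * (cfDen α (n+1) : ℝ) - (cfNum α (n+1) : ℝ)) * R
  termination_by n => n

lemma dd_succ (hα : Irrational α) (n : ℕ) : dd α (n+1) = cfTail α (n+3) * dd α n := by
  have R := tail_rel hα (n+1)
  have hq : (cfDen α (n+2) : ℝ) = (cfDigit α (n+2) : ℝ) * (cfDen α (n+1) : ℝ) + (cfDen α n : ℝ) := by
    rw [show cfDen α (n+2) = cfDigit α (n + 2) * cfDen α (n + 1) + cfDen α n from rfl]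
    push_cast; ring
  unfold dd
  rw [hq]
  linear_combination (-(cfDen α (n+1) : ℝ)) * R

lemma err_eq (hα : Irrational α) (n : ℕ) :
    (cfDen α (n+1) : ℝ) * α - (cfNum α (n+1) : ℝ) = (-1)^(n+1) / dd α n := by
  have hd := dd_pos hα n
  have H := conv_id hα n
  have det : (cfNum α (n+1) : ℝ) * (cfDen α n : ℝ) - (cfNum α n : ℝ) * (cfDen α (n+1) : ℝ)
      = (-1)^n := by
    exact_mod_cast det_eq (α := α) n
  rw [eq_div_iff hd.ne']
  unfold dd at H ⊢
  linear_combination (cfDen α (n+1) : ℝ) * H - det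

lemma abs_err (hα : Irrational α) (n : ℕ) :
    |(cfDen α (n+1) : ℝ) * α - (cfNum α (n+1) : ℝ)| = 1 / dd α n := by
  rw [err_eq hα n, abs_div, abs_pow, abs_neg, abs_one, one_pow]
  rw [abs_of_pos (dd_pos hα n)]

end ConvId

/-- `bet α n = qₙ/qₙ₊₁`. -/
noncomputable def bet (α : ℝ) (n : ℕ) : ℝ := (cfDen α n : ℝ) / (cfDen α (n+1) : ℝ)

section Bet
variable {α : ℝ}

lemma bet_pos (hα : Irrational α) (n : ℕ) : 0 < bet α n :=
  div_pos (den_pos_real hα n) (den_pos_real hα (n+1))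

lemma bet_le_one (hα : Irrational α) (n : ℕ) : bet α n ≤ 1 := by
  rw [bet, div_le_one (den_pos_real hα (n+1))]
  exact_mod_cast den_le_succ hα n

lemma bet_lt_one (hα : Irrational α) (n : ℕ) : bet α (n+1) < 1 := by
  rw [bet, div_lt_one (den_pos_real hα (n+2))]
  exact_mod_cast den_lt_succ hα n

lemma bet_rec (hα : Irrational α) (n : ℕ) :
    bet α (n+1) * ((cfDigit α (n+2) : ℝ) + bet α n) = 1 := by
  have h0 := den_pos_real hα n
  have h1 := den_pos_real hα (n+1)
  have h2 := den_pos_real hα (n+2)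
  have hq : (cfDen α (n+2) : ℝ) = (cfDigit α (n+2) : ℝ) * (cfDen α (n+1) : ℝ) + (cfDen α n : ℝ) := by
    rw [show cfDen α (n+2) = cfDigit α (n + 2) * cfDen α (n + 1) + cfDen α n from rfl]
    push_cast; ring
  have hb1 : bet α (n+1) = (cfDen α (n+1) : ℝ) / (cfDen α (n+2) : ℝ) := rfl
  rw [hb1, bet]
  field_simp
  linear_combination -hq

lemma bet_ge_nat (hα : Irrational α) (n : ℕ) : (n:ℝ) + 1 ≤ (cfDen α (n+1) : ℝ) := by
  have h := den_ge_nat hα (n+1)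
  have h2 : ((n+1 : ℕ) : ℝ) ≤ ((cfDen α (n+1) : ℤ) : ℝ) := by exact_mod_cast h
  push_cast at h2
  linarith

end Bet

section Psi
variable {α : ℝ}

lemma psi2_nonneg (t : ℝ) : 0 ≤ psi2 α t := by
  apply Real.sInf_nonneg
  rintro x ⟨p, q, -, -, -, rfl⟩
  exact abs_nonneg _

lemma psi2_le {p q : ℤ} {t : ℝ} (hq : 1 ≤ q) (hqt : (q:ℝ) ≤ t)
    (hnc : ∀ k, (p, q) ≠ (cfNum α k, cfDen α k)) :
    psi2 α t ≤ |(q:ℝ) * α - (p:ℝ)| := by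
  apply csInf_le
  · exact ⟨0, by rintro x ⟨p', q', -, -, -, rfl⟩; exact abs_nonneg _⟩
  · exact ⟨p, q, hq, hqt, hnc, rfl⟩

lemma two_mul_not_conv (hα : Irrational α) (m : ℕ) :
    ∀ k, (2 * cfNum α (m+1), 2 * cfDen α (m+1)) ≠ (cfNum α k, cfDen α k) := by
  intro k h
  injection h with h1 h2
  match k with
  | 0 =>
    have h0 : cfDen α 0 = 1 := rfl
    rw [h0] at h2
    have := den_ge_one hα (m+1)
    omega
  | j + 1 =>
    have det := det_eq (α := α) j
    have hdvd : (2:ℤ) ∣ (cfNum α (j+1) * cfDen α j - cfNum α j * cfDen α (j+1)) := by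
      refine ⟨cfNum α (m+1) * cfDen α j - cfNum α j * cfDen α (m+1), ?_⟩
      rw [← h1, ← h2]; ring
    rw [det] at hdvd
    rcases Nat.even_or_odd j with hj | hj
    · rw [hj.neg_one_pow] at hdvd; norm_num at hdvd
    · rw [hj.neg_one_pow] at hdvd; norm_num at hdvd

lemma sum_not_conv (hα : Irrational α) (m : ℕ) (hd : 2 ≤ cfDigit α (m+2)) :
    ∀ k, (cfNum α (m+1) + cfNum α m, cfDen α (m+1) + cfDen α m) ≠ (cfNum α k, cfDen α k) := by
  intro k h
  injection h with h1 h2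
  have hm1 := den_ge_one hα m
  have hup : cfDen α (m+1) + cfDen α m < cfDen α (m+2) := by
    have h1' := den_ge_one hα (m+1)
    show _ < cfDigit α (m + 2) * cfDen α (m + 1) + cfDen α m
    nlinarith
  rcases le_or_gt k (m+1) with hk | hk
  · have := den_mono hα hk
    omega
  · have := den_mono hα (show m + 2 ≤ k from hk)
    omega

lemma candK (hα : Irrational α) (n : ℕ) :
    ∃ t : ℝ, (cfDen α (n+1) : ℝ) ≤ t ∧
      t * psi2 α t ≤ 4 / (cfTail α (n+2) + bet α n) := by
  have hq1pos : (1:ℤ) ≤ cfDen α (n+1) := den_ge_one hα (n+1)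
  have hq1r : (0:ℝ) < (cfDen α (n+1):ℝ) := den_pos_real hα (n+1)
  have hq0r : (0:ℝ) < (cfDen α n:ℝ) := den_pos_real hα n
  have htp : 0 < cfTail α (n+2) := tail_pos hα (n+1)
  refine ⟨((2 * cfDen α (n+1) : ℤ) : ℝ), by push_cast; linarith, ?_⟩
  have hmem := psi2_le (α := α) (p := 2 * cfNum α (n+1)) (q := 2 * cfDen α (n+1))
    (by omega) (le_refl _) (two_mul_not_conv hα n)
  have habs : |((2 * cfDen α (n+1) : ℤ):ℝ) * α - ((2 * cfNum α (n+1) : ℤ):ℝ)| = 2 / dd α n := by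
    push_cast
    rw [show (2:ℝ) * (cfDen α (n+1):ℝ) * α - 2 * (cfNum α (n+1):ℝ)
        = 2 * ((cfDen α (n+1):ℝ) * α - (cfNum α (n+1):ℝ)) by ring]
    rw [abs_mul, abs_two, abs_err hα n]
    ring
  rw [habs] at hmem
  have ht0 : (0:ℝ) ≤ ((2 * cfDen α (n+1) : ℤ):ℝ) := by push_cast; linarith
  refine le_trans (mul_le_mul_of_nonneg_left hmem ht0) (le_of_eq ?_)
  have hdd := dd_pos hα n
  have hden : 0 < cfTail α (n+2) + bet α n := by
    have := bet_pos hα n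
    linarith
  rw [eq_div_iff hden.ne']
  unfold dd at hdd ⊢
  unfold bet
  push_cast
  field_simp
  ring

lemma candV1 (hα : Irrational α) (n : ℕ) (hd : 2 ≤ cfDigit α (n+3)) :
    ∃ t : ℝ, (cfDen α (n+2) : ℝ) ≤ t ∧
      t * psi2 α t ≤ (1 + bet α (n+1)) * (cfTail α (n+3) - 1)
        / (cfTail α (n+3) + bet α (n+1)) := by
  have hq1r : (0:ℝ) < (cfDen α (n+1):ℝ) := den_pos_real hα (n+1)
  have hq2r : (0:ℝ) < (cfDen α (n+2):ℝ) := den_pos_real hα (n+2)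
  have hq1pos : (1:ℤ) ≤ cfDen α (n+1) := den_ge_one hα (n+1)
  have hq2pos : (1:ℤ) ≤ cfDen α (n+2) := den_ge_one hα (n+2)
  have ht : 1 < cfTail α (n+3) := tail_succ_gt_one hα (n+2)
  have hdd := dd_pos hα (n+1)
  have hdd0 := dd_pos hα n
  have hrec := dd_succ hα n
  refine ⟨((cfDen α (n+2) + cfDen α (n+1) : ℤ) : ℝ), by push_cast; linarith, ?_⟩
  have hmem := psi2_le (α := α) (p := cfNum α (n+2) + cfNum α (n+1))
    (q := cfDen α (n+2) + cfDen α (n+1))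
    (by omega) (le_refl _) (sum_not_conv hα (n+1) hd)
  have habs : |((cfDen α (n+2) + cfDen α (n+1) : ℤ):ℝ) * α
      - ((cfNum α (n+2) + cfNum α (n+1) : ℤ):ℝ)|
      = (cfTail α (n+3) - 1) / dd α (n+1) := by
    push_cast
    rw [show ((cfDen α (n+2):ℝ) + (cfDen α (n+1):ℝ)) * α
          - ((cfNum α (n+2):ℝ) + (cfNum α (n+1):ℝ))
        = ((cfDen α (n+2):ℝ) * α - (cfNum α (n+2):ℝ))
          + ((cfDen α (n+1):ℝ) * α - (cfNum α (n+1):ℝ)) by ring]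
    rw [err_eq hα (n+1), err_eq hα n]
    rw [show (-1:ℝ)^(n+2) / dd α (n+1) + (-1)^(n+1) / dd α n
        = (-1)^(n+1) * (1 / dd α n - 1 / dd α (n+1)) by ring]
    rw [abs_mul]
    rw [show |(-1:ℝ)^(n+1)| = 1 by rw [abs_pow, abs_neg, abs_one, one_pow], one_mul]
    have hval : 1 / dd α n - 1 / dd α (n+1) = (cfTail α (n+3) - 1) / dd α (n+1) := by
      rw [hrec]
      have htne : cfTail α (n+3) ≠ 0 := by positivity
      field_simp
    rw [hval]
    exact abs_of_nonneg (div_nonneg (by linarith) hdd.le)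
  rw [habs] at hmem
  have ht0 : (0:ℝ) ≤ ((cfDen α (n+2) + cfDen α (n+1) : ℤ):ℝ) := by push_cast; linarith
  refine le_trans (mul_le_mul_of_nonneg_left hmem ht0) (le_of_eq ?_)
  have hden : 0 < cfTail α (n+3) + bet α (n+1) := by
    have := bet_pos hα (n+1)
    linarith
  rw [eq_div_iff hden.ne']
  unfold dd
  have hb1 : bet α (n+1) = (cfDen α (n+1) : ℝ) / (cfDen α (n+2) : ℝ) := rfl
  rw [hb1]
  push_cast
  field_simp

end Psi

section Arith

lemma sqrt21_gt : (4.582:ℝ) < Real.sqrt 21 := by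
  have h : (4.582:ℝ) = Real.sqrt (4.582^2) := (Real.sqrt_sq (by norm_num)).symm
  rw [h]
  apply Real.sqrt_lt_sqrt (by positivity)
  norm_num

lemma sqrt21_lt : Real.sqrt 21 < 4.583 := by
  have h : Real.sqrt 21 < Real.sqrt (4.583^2) := by
    apply Real.sqrt_lt_sqrt (by norm_num)
    norm_num
  rwa [Real.sqrt_sq (by norm_num)] at h

lemma sqrt173_gt : (13.152:ℝ) < Real.sqrt 173 := by
  have h : (13.152:ℝ) = Real.sqrt (13.152^2) := (Real.sqrt_sq (by norm_num)).symm
  rw [h]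
  apply Real.sqrt_lt_sqrt (by positivity)
  norm_num

lemma sqrt173_lt : Real.sqrt 173 < 13.154 := by
  have h : Real.sqrt 173 < Real.sqrt (13.154^2) := by
    apply Real.sqrt_lt_sqrt (by norm_num)
    norm_num
  rwa [Real.sqrt_sq (by norm_num)] at h

lemma rec_lo {y k x c : ℝ} (h : y * (k + x) = 1) (hx : x ≤ c) (hy : 0 < y)
    (hkc : 0 < k + c) : 1/(k+c) ≤ y := by
  rw [div_le_iff₀ hkc]
  nlinarith [mul_nonneg hy.le (sub_nonneg.2 hx)]

lemma rec_lo' {y k x c : ℝ} (h : y * (k + x) = 1) (hx : x < c) (hy : 0 < y)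
    (hkc : 0 < k + c) : 1/(k+c) < y := by
  rw [div_lt_iff₀ hkc]
  nlinarith [mul_pos hy (sub_pos.2 hx)]

lemma rec_hi {y k x c : ℝ} (h : y * (k + x) = 1) (hx : c ≤ x) (hy : 0 < y)
    (hkc : 0 < k + c) : y ≤ 1/(k+c) := by
  rw [le_div_iff₀ hkc]
  nlinarith [mul_nonneg hy.le (sub_nonneg.2 hx)]

lemma rec_hi' {y k x c : ℝ} (h : y * (k + x) = 1) (hx : c < x) (hy : 0 < y)
    (hkc : 0 < k + c) : y < 1/(k+c) := by
  rw [lt_div_iff₀ hkc]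
  nlinarith [mul_pos hy (sub_pos.2 hx)]

lemma tl_pos {T T' a : ℝ} (h : (T - a) * T' = 1) (hp : 0 < T') : 0 < T - a := by
  by_contra hcon
  push_neg at hcon
  nlinarith

lemma tl_lo {T T' a c : ℝ} (h : (T - a) * T' = 1) (hT' : T' ≤ c) (hp : 0 < T') :
    a + 1/c ≤ T := by
  have hc : 0 < c := lt_of_lt_of_le hp hT'
  have hTa := tl_pos h hp
  have h1 : 1/c ≤ T - a := by
    rw [div_le_iff₀ hc]
    nlinarith [mul_nonneg hTa.le (sub_nonneg.2 hT')]
  linarith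

lemma tl_lo' {T T' a c : ℝ} (h : (T - a) * T' = 1) (hT' : T' < c) (hp : 0 < T') :
    a + 1/c < T := by
  have hc : 0 < c := lt_trans hp hT'
  have hTa := tl_pos h hp
  have h1 : 1/c < T - a := by
    rw [div_lt_iff₀ hc]
    nlinarith [mul_pos hTa (sub_pos.2 hT')]
  linarith

lemma tl_hi {T T' a c : ℝ} (h : (T - a) * T' = 1) (hT' : c ≤ T') (hc : 0 < c) :
    T ≤ a + 1/c := by
  have hp : 0 < T' := lt_of_lt_of_le hc hT'
  have hTa := tl_pos h hp
  have h1 : T - a ≤ 1/c := by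
    rw [le_div_iff₀ hc]
    nlinarith [mul_nonneg hTa.le (sub_nonneg.2 hT')]
  linarith

lemma tl_hi' {T T' a c : ℝ} (h : (T - a) * T' = 1) (hT' : c < T') (hc : 0 < c) :
    T < a + 1/c := by
  have hp : 0 < T' := lt_trans hc hT'
  have hTa := tl_pos h hp
  have h1 : T - a < 1/c := by
    rw [lt_div_iff₀ hc]
    nlinarith [mul_pos hTa (sub_pos.2 hT')]
  linarith

lemma headS1 {s b3 b4 : ℝ} (hs2 : s^2 = 21) (hsl : 4.582 < s)
    (r4 : b4 * (1 + b3) = 1) (hB : b4 < (s+1)/10) (b4p : 0 < b4) (b3p : 0 < b3) :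
    (s-3)/2 < b3 := by
  nlinarith [mul_pos (sub_pos.2 hB) (show (0:ℝ) < 1 + b3 by linarith)]

lemma headS2 {s b3 b2 : ℝ} (hs2 : s^2 = 21) (hsl : 4.582 < s) (hsu : s < 4.583)
    (r3 : b3 * (1 + b2) = 1) (h : (s-3)/2 < b3) (b2p : 0 < b2) :
    b2 < (s-3)/6 := by
  nlinarith [mul_pos (sub_pos.2 h) (show (0:ℝ) < 1 + b2 by linarith)]

lemma headS3 {s b2 D b1 : ℝ} (hs2 : s^2 = 21) (hsl : 4.582 < s) (hsu : s < 4.583)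
    (r2 : b2 * (D + b1) = 1) (h : b2 < (s-3)/6) (hp : 0 < D + b1) (b2p : 0 < b2) :
    (s+3)/2 < D + b1 := by
  nlinarith [mul_pos (sub_pos.2 h) hp]

lemma v1bound {x b : ℝ} (hx1 : 1 < x) (hx4 : x < 4) (hb : 0 < b) (hbu : b < 25/91) :
    (1+b)*(x-1)/(x+b) ≤ 348/389 := by
  rw [div_le_iff₀ (by linarith)]
  nlinarith [mul_nonneg (by linarith : (0:ℝ) ≤ 4 - x) (by linarith : (0:ℝ) ≤ 41 + 389*b)]

end Arith

section KeyLemma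
variable {α : ℝ}

lemma pos_of_prod_one {y z : ℝ} (h : y * z = 1) (hy : 0 < y) : 0 < z := by
  nlinarith

lemma tl_inv_lo {T T' a c : ℝ} (h : (T - a) * T' = 1) (hT : T < a + c) (hp : 0 < T')
    (hc : 0 < c) : 1/c < T' := by
  have hTa := tl_pos h hp
  rw [div_lt_iff₀ hc]
  nlinarith [mul_pos (show (0:ℝ) < c - (T - a) by linarith) hp]

lemma tl_inv_hi {T T' a c : ℝ} (h : (T - a) * T' = 1) (hT : a + c < T) (hp : 0 < T')
    (hc : 0 < c) : T' < 1/c := by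
  have hTa := tl_pos h hp
  rw [lt_div_iff₀ hc]
  nlinarith [mul_pos (show (0:ℝ) < (T - a) - c by linarith) hp]

lemma tail_relD (hα : Irrational α) (k : ℕ) (v : ℤ) (hv : cfDigit α (k+1) = v) :
    (cfTail α (k+1) - (v:ℝ)) * cfTail α (k+2) = 1 := by
  have h := tail_rel hα k
  rw [hv] at h
  exact h

lemma candK' (hα : Irrational α) (j : ℕ) :
    ∃ t : ℝ, (j:ℝ) ≤ t ∧ t * psi2 α t ≤ 4 / (cfTail α (j+2) + bet α j) := by
  obtain ⟨t, ht1, ht2⟩ := candK hα j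
  refine ⟨t, ?_, ht2⟩
  have h := bet_ge_nat hα j
  linarith

lemma candV1' (hα : Irrational α) (j : ℕ) (hd : 2 ≤ cfDigit α (j+3)) :
    ∃ t : ℝ, (j:ℝ) ≤ t ∧ t * psi2 α t ≤ (1 + bet α (j+1)) * (cfTail α (j+3) - 1)
      / (cfTail α (j+3) + bet α (j+1)) := by
  obtain ⟨t, ht1, ht2⟩ := candV1 hα j hd
  refine ⟨t, ?_, ht2⟩
  have h := bet_ge_nat hα (j+1)
  push_cast at h ht1 ⊢
  linarith

set_option maxHeartbeats 1000000 in
lemma key (hα : Irrational α) (n : ℕ)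
    (d4 : cfDigit α (n+4) = 1) (d5 : cfDigit α (n+5) = 1) (d6 : cfDigit α (n+6) = 3)
    (d7 : cfDigit α (n+7) = 1) (d8 : cfDigit α (n+8) = 1) (d9 : cfDigit α (n+9) = 1)
    (d10 : cfDigit α (n+10) = 3) :
    ∃ t : ℝ, (n:ℝ) ≤ t ∧ t * psi2 α t
      ≤ 4 / ((Real.sqrt 21 + 1)/10 + (Real.sqrt 21 + 4575)/1258) := by
  have hs2 : (Real.sqrt 21)^2 = 21 := Real.sq_sqrt (by norm_num)
  have hsl : (4.582:ℝ) < Real.sqrt 21 := sqrt21_gt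
  have hsu : Real.sqrt 21 < 4.583 := sqrt21_lt
  have hW0 : 0 < (Real.sqrt 21 + 1)/10 + (Real.sqrt 21 + 4575)/1258 := by linarith
  have m4 : (cfTail α (n+4) - (1:ℝ)) * cfTail α (n+5) = 1 := by
    have h := tail_relD hα (n+3) 1 d4
    rw [show n+3+1 = n+4 from by omega, show n+3+2 = n+5 from by omega] at h
    push_cast at h; exact h
  have m5 : (cfTail α (n+5) - (1:ℝ)) * cfTail α (n+6) = 1 := by
    have h := tail_relD hα (n+4) 1 d5
    rw [show n+4+1 = n+5 from by omega, show n+4+2 = n+6 from by omega] at h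
    push_cast at h; exact h
  have m6 : (cfTail α (n+6) - (3:ℝ)) * cfTail α (n+7) = 1 := by
    have h := tail_relD hα (n+5) 3 d6
    rw [show n+5+1 = n+6 from by omega, show n+5+2 = n+7 from by omega] at h
    push_cast at h; exact h
  have m7 : (cfTail α (n+7) - (1:ℝ)) * cfTail α (n+8) = 1 := by
    have h := tail_relD hα (n+6) 1 d7
    rw [show n+6+1 = n+7 from by omega, show n+6+2 = n+8 from by omega] at h
    push_cast at h; exact h
  have m8 : (cfTail α (n+8) - (1:ℝ)) * cfTail α (n+9) = 1 := by
    have h := tail_relD hα (n+7) 1 d8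
    rw [show n+7+1 = n+8 from by omega, show n+7+2 = n+9 from by omega] at h
    push_cast at h; exact h
  have m9 : (cfTail α (n+9) - (1:ℝ)) * cfTail α (n+10) = 1 := by
    have h := tail_relD hα (n+8) 1 d9
    rw [show n+8+1 = n+9 from by omega, show n+8+2 = n+10 from by omega] at h
    push_cast at h; exact h
  have m10 : (cfTail α (n+10) - (3:ℝ)) * cfTail α (n+11) = 1 := by
    have h := tail_relD hα (n+9) 3 d10
    rw [show n+9+1 = n+10 from by omega, show n+9+2 = n+11 from by omega] at h
    push_cast at h; exact h
  have g7 : 1 < cfTail α (n+7) := by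
    have h := tail_succ_gt_one hα (n+6); rwa [show n+6+1 = n+7 from by omega] at h
  have g11 : 1 < cfTail α (n+11) := by
    have h := tail_succ_gt_one hα (n+10); rwa [show n+10+1 = n+11 from by omega] at h
  have g12 : 1 < cfTail α (n+12) := by
    have h := tail_succ_gt_one hα (n+11); rwa [show n+11+1 = n+12 from by omega] at h
  have g13 : 1 < cfTail α (n+13) := by
    have h := tail_succ_gt_one hα (n+12); rwa [show n+12+1 = n+13 from by omega] at h
  have q4 : 0 < cfTail α (n+4) := by
    have h := tail_pos hα (n+3); rwa [show n+3+1 = n+4 from by omega] at h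
  have q5 : 0 < cfTail α (n+5) := by
    have h := tail_pos hα (n+4); rwa [show n+4+1 = n+5 from by omega] at h
  have q6 : 0 < cfTail α (n+6) := by
    have h := tail_pos hα (n+5); rwa [show n+5+1 = n+6 from by omega] at h
  have q7 : 0 < cfTail α (n+7) := by
    have h := tail_pos hα (n+6); rwa [show n+6+1 = n+7 from by omega] at h
  have q8 : 0 < cfTail α (n+8) := by
    have h := tail_pos hα (n+7); rwa [show n+7+1 = n+8 from by omega] at h
  have q9 : 0 < cfTail α (n+9) := by
    have h := tail_pos hα (n+8); rwa [show n+8+1 = n+9 from by omega] at h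
  have q10 : 0 < cfTail α (n+10) := by
    have h := tail_pos hα (n+9); rwa [show n+9+1 = n+10 from by omega] at h
  have q11 : 0 < cfTail α (n+11) := by
    have h := tail_pos hα (n+10); rwa [show n+10+1 = n+11 from by omega] at h
  have q12 : 0 < cfTail α (n+12) := by
    have h := tail_pos hα (n+11); rwa [show n+11+1 = n+12 from by omega] at h
  have q13 : 0 < cfTail α (n+13) := by
    have h := tail_pos hα (n+12); rwa [show n+12+1 = n+13 from by omega] at h
  have b1p := bet_pos hα (n+1)
  have b2p := bet_pos hα (n+2)
  have b3p := bet_pos hα (n+3)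
  have b4p := bet_pos hα (n+4)
  have b5p := bet_pos hα (n+5)
  have b6p := bet_pos hα (n+6)
  have b7p := bet_pos hα (n+7)
  have b8p := bet_pos hα (n+8)
  have b9p := bet_pos hα (n+9)
  have b10p := bet_pos hα (n+10)
  have b11p := bet_pos hα (n+11)
  have b1u : bet α (n+1) ≤ 1 := bet_le_one hα (n+1)
  have b2u : bet α (n+2) ≤ 1 := bet_le_one hα (n+2)
  have b3u : bet α (n+3) < 1 := by
    have h := bet_lt_one hα (n+2); rwa [show n+2+1 = n+3 from by omega] at h
  have r3 : bet α (n+3) * (1 + bet α (n+2)) = 1 := by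
    have h := bet_rec hα (n+2)
    rw [show n+2+2 = n+4 from by omega, show n+2+1 = n+3 from by omega, d4] at h
    push_cast at h; exact h
  have r4 : bet α (n+4) * (1 + bet α (n+3)) = 1 := by
    have h := bet_rec hα (n+3)
    rw [show n+3+2 = n+5 from by omega, show n+3+1 = n+4 from by omega, d5] at h
    push_cast at h; exact h
  have r5 : bet α (n+5) * (3 + bet α (n+4)) = 1 := by
    have h := bet_rec hα (n+4)
    rw [show n+4+2 = n+6 from by omega, show n+4+1 = n+5 from by omega, d6] at h
    push_cast at h; exact h
  have r6 : bet α (n+6) * (1 + bet α (n+5)) = 1 := by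
    have h := bet_rec hα (n+5)
    rw [show n+5+2 = n+7 from by omega, show n+5+1 = n+6 from by omega, d7] at h
    push_cast at h; exact h
  have r7 : bet α (n+7) * (1 + bet α (n+6)) = 1 := by
    have h := bet_rec hα (n+6)
    rw [show n+6+2 = n+8 from by omega, show n+6+1 = n+7 from by omega, d8] at h
    push_cast at h; exact h
  have r8 : bet α (n+8) * (1 + bet α (n+7)) = 1 := by
    have h := bet_rec hα (n+7)
    rw [show n+7+2 = n+9 from by omega, show n+7+1 = n+8 from by omega, d9] at h
    push_cast at h; exact h
  have r9 : bet α (n+9) * (3 + bet α (n+8)) = 1 := by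
    have h := bet_rec hα (n+8)
    rw [show n+8+2 = n+10 from by omega, show n+8+1 = n+9 from by omega, d10] at h
    push_cast at h; exact h
  have hb3 : 1/2 ≤ bet α (n+3) := by
    have h := rec_lo r3 b2u b3p (by norm_num); linarith [h]
  have hb4u : bet α (n+4) ≤ 2/3 := by
    have h := rec_hi r4 hb3 b4p (by norm_num); linarith [h]
  have hb4l : 1/2 < bet α (n+4) := by
    have h := rec_lo' r4 b3u b4p (by norm_num); linarith [h]
  have hb5l : 3/11 ≤ bet α (n+5) := by
    have h := rec_lo r5 hb4u b5p (by norm_num); linarith [h]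
  have hb5u : bet α (n+5) < 2/7 := by
    have h := rec_hi' r5 hb4l b5p (by norm_num); linarith [h]
  have hb6l : 7/9 < bet α (n+6) := by
    have h := rec_lo' r6 hb5u b6p (by norm_num); linarith [h]
  have hb6u : bet α (n+6) ≤ 11/14 := by
    have h := rec_hi r6 hb5l b6p (by norm_num); linarith [h]
  have hb7l : 14/25 ≤ bet α (n+7) := by
    have h := rec_lo r7 hb6u b7p (by norm_num); linarith [h]
  have hb7u : bet α (n+7) < 9/16 := by
    have h := rec_hi' r7 hb6l b7p (by norm_num); linarith [h]
  have hb8l : 16/25 < bet α (n+8) := by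
    have h := rec_lo' r8 hb7u b8p (by norm_num); linarith [h]
  have hb8u : bet α (n+8) ≤ 25/39 := by
    have h := rec_hi r8 hb7l b8p (by norm_num); linarith [h]
  have hb9l : 39/142 ≤ bet α (n+9) := by
    have h := rec_lo r9 hb8u b9p (by norm_num); linarith [h]
  have hb9u : bet α (n+9) < 25/91 := by
    have h := rec_hi' r9 hb8l b9p (by norm_num); linarith [h]
  by_cases hu : (7117/2000 : ℝ) ≤ cfTail α (n+10)
  · by_cases hB : (Real.sqrt 21 + 1)/10 ≤ bet α (n+4)
    · -- main case : κ⁴ at n+5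
      have hT9u : cfTail α (n+9) ≤ 1 + 1/(7117/2000) := tl_hi m9 hu (by norm_num)
      have hT8l : 1 + 1/(1 + 1/(7117/2000)) ≤ cfTail α (n+8) := tl_lo m8 hT9u q9
      have hT7u : cfTail α (n+7) ≤ 1 + 1/(1 + 1/(1 + 1/(7117/2000))) :=
        tl_hi m7 hT8l (by norm_num)
      have hT6l : 3 + 1/(1 + 1/(1 + 1/(1 + 1/(7117/2000)))) ≤ cfTail α (n+6) :=
        tl_lo m6 hT7u q7
      have hT6l' : (92287:ℝ)/25351 ≤ cfTail α (n+6) := le_trans (by norm_num) hT6l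
      obtain ⟨t, ht1, ht2⟩ := candK' hα (n+4)
      rw [show n+4+2 = n+6 from by omega] at ht2
      refine ⟨t, by push_cast at ht1 ⊢; linarith, le_trans ht2 ?_⟩
      apply div_le_div_of_nonneg_left (by norm_num) hW0
      linarith
    · -- head case
      push_neg at hB
      have hb3s : (Real.sqrt 21 - 3)/2 < bet α (n+3) := headS1 hs2 hsl r4 hB b4p b3p
      have hb2s : bet α (n+2) < (Real.sqrt 21 - 3)/6 := headS2 hs2 hsl hsu r3 hb3s b2p
      have r2 : bet α (n+2) * ((cfDigit α (n+3) : ℝ) + bet α (n+1)) = 1 := by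
        have h := bet_rec hα (n+1)
        rw [show n+1+2 = n+3 from by omega, show n+1+1 = n+2 from by omega] at h
        exact h
      have hd3pos : 0 < (cfDigit α (n+3) : ℝ) + bet α (n+1) :=
        pos_of_prod_one r2 b2p
      have hd3s : (Real.sqrt 21 + 3)/2 < (cfDigit α (n+3) : ℝ) + bet α (n+1) :=
        headS3 hs2 hsl hsu r2 hb2s hd3pos b2p
      have hd3ge : (3:ℤ) ≤ cfDigit α (n+3) := by
        have h2 : (2:ℝ) < (cfDigit α (n+3) : ℝ) := by linarith
        exact_mod_cast h2
      have m3 : (cfTail α (n+3) - (cfDigit α (n+3) : ℝ)) * cfTail α (n+4) = 1 := by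
        have h := tail_rel hα (n+2)
        rw [show n+2+1 = n+3 from by omega, show n+2+2 = n+4 from by omega] at h
        exact h
      have hT6u : cfTail α (n+6) < 3 + 1/1 := tl_hi' m6 g7 (by norm_num)
      have hT5l : 1 + 1/(3 + 1/1) < cfTail α (n+5) := tl_lo' m5 hT6u q6
      have hT4u : cfTail α (n+4) < 1 + 1/(1 + 1/(3 + 1/1)) := tl_hi' m4 hT5l (by norm_num)
      have hT3l : (cfDigit α (n+3) : ℝ) + 1/(1 + 1/(1 + 1/(3 + 1/1))) < cfTail α (n+3) :=
        tl_lo' m3 hT4u q4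
      have hT3l' : (cfDigit α (n+3) : ℝ) + 5/9 < cfTail α (n+3) := by
        have : (5:ℝ)/9 ≤ 1/(1 + 1/(1 + 1/(3 + 1/1))) := by norm_num
        linarith
      obtain ⟨t, ht1, ht2⟩ := candK' hα (n+1)
      rw [show n+1+2 = n+3 from by omega] at ht2
      refine ⟨t, by push_cast at ht1 ⊢; linarith, le_trans ht2 ?_⟩
      apply div_le_div_of_nonneg_left (by norm_num) hW0
      rcases lt_or_ge (cfDigit α (n+3) : ℝ) (7/2) with h3 | h4
      · have hd3eq : (cfDigit α (n+3) : ℝ) = 3 := by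
          have hlt : cfDigit α (n+3) < 4 := by
            exact_mod_cast h3.trans_le (by norm_num : (7:ℝ)/2 ≤ 4)
          have he : cfDigit α (n+3) = 3 := by omega
          exact_mod_cast he
        rw [hd3eq] at hd3s hT3l'
        linarith
      · linarith
  · -- tail case: T10 < r
    push_neg at hu
    have hT11l : 1/(1117/2000) < cfTail α (n+11) :=
      tl_inv_lo m10 (by linarith : cfTail α (n+10) < 3 + 1117/2000) q11 (by norm_num)
    by_cases h4 : 4 ≤ cfDigit α (n+11)
    · -- digit ≥ 4 : κ⁴ at n+10
      have hT11ge : (4:ℝ) ≤ cfTail α (n+11) := by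
        have h := digit_le_tail (α := α) (n+11)
        have h4' : (4:ℝ) ≤ (cfDigit α (n+11) : ℝ) := by exact_mod_cast h4
        linarith
      obtain ⟨t, ht1, ht2⟩ := candK' hα (n+9)
      rw [show n+9+2 = n+11 from by omega] at ht2
      refine ⟨t, by push_cast at ht1 ⊢; linarith, le_trans ht2 ?_⟩
      apply div_le_div_of_nonneg_left (by norm_num) hW0
      linarith
    · by_cases h2 : 2 ≤ cfDigit α (n+11)
      · -- digit ∈ {2,3} : V1 at n+10
        push_neg at h4
        have hT11u4 : cfTail α (n+11) < 4 := by
          have h := tail_lt_digit_add_one (α := α) (n+11)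
          have h4' : (cfDigit α (n+11) : ℝ) ≤ 3 := by
            exact_mod_cast (by omega : cfDigit α (n+11) ≤ 3)
          linarith
        have h2' : 2 ≤ cfDigit α (n+8+3) := by
          rwa [show n+8+3 = n+11 from by omega]
        obtain ⟨t, ht1, ht2⟩ := candV1' hα (n+8) h2'
        rw [show n+8+3 = n+11 from by omega, show n+8+1 = n+9 from by omega] at ht2
        refine ⟨t, by push_cast at ht1 ⊢; linarith, le_trans ht2 ?_⟩
        refine le_trans (v1bound g11 hT11u4 b9p hb9u) ?_
        rw [div_le_div_iff₀ (by norm_num) hW0]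
        linarith
      · -- digit = 1
        have h1d : cfDigit α (n+11) = 1 := by
          have h := digit_ge_one hα (n+10)
          rw [show n+10+1 = n+11 from by omega] at h
          omega
        have m11 : (cfTail α (n+11) - (1:ℝ)) * cfTail α (n+12) = 1 := by
          have h := tail_relD hα (n+10) 1 h1d
          rw [show n+10+1 = n+11 from by omega, show n+10+2 = n+12 from by omega] at h
          push_cast at h; exact h
        have hT12u : cfTail α (n+12) < 1/(883/1117) :=
          tl_inv_hi m11 (by linarith : (1:ℝ) + 883/1117 < cfTail α (n+11)) q12 (by norm_num)
        have h1d12 : cfDigit α (n+12) = 1 := by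
          have hge := digit_ge_one hα (n+11)
          rw [show n+11+1 = n+12 from by omega] at hge
          have hle := digit_le_tail (α := α) (n+12)
          have hr : (cfDigit α (n+12) : ℝ) < 2 := by
            have : (1:ℝ)/(883/1117) < 2 := by norm_num
            linarith
          have : cfDigit α (n+12) < 2 := by exact_mod_cast hr
          omega
        have m12 : (cfTail α (n+12) - (1:ℝ)) * cfTail α (n+13) = 1 := by
          have h := tail_relD hα (n+11) 1 h1d12
          rw [show n+11+1 = n+12 from by omega, show n+11+2 = n+13 from by omega] at h
          push_cast at h; exact h
        have hT13l : 1/(234/883) < cfTail α (n+13) :=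
          tl_inv_lo m12 (by linarith : cfTail α (n+12) < 1 + 234/883) q13 (by norm_num)
        have r10 : bet α (n+10) * (1 + bet α (n+9)) = 1 := by
          have h := bet_rec hα (n+9)
          rw [show n+9+2 = n+11 from by omega, show n+9+1 = n+10 from by omega, h1d] at h
          push_cast at h; exact h
        have r11 : bet α (n+11) * (1 + bet α (n+10)) = 1 := by
          have h := bet_rec hα (n+10)
          rw [show n+10+2 = n+12 from by omega, show n+10+1 = n+11 from by omega, h1d12] at h
          push_cast at h; exact h
        have hb10u : bet α (n+10) ≤ 142/181 := by
          have h := rec_hi r10 hb9l b10p (by norm_num); linarith [h]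
        have hb11l : 181/323 ≤ bet α (n+11) := by
          have h := rec_lo r11 hb10u b11p (by norm_num); linarith [h]
        obtain ⟨t, ht1, ht2⟩ := candK' hα (n+11)
        rw [show n+11+2 = n+13 from by omega] at ht2
        refine ⟨t, by push_cast at ht1 ⊢; linarith, le_trans ht2 ?_⟩
        apply div_le_div_of_nonneg_left (by norm_num) hW0
        have : (883:ℝ)/234 ≤ cfTail α (n+13) := by
          have hnum : (883:ℝ)/234 = 1/(234/883) := by norm_num
          linarith [hT13l, hnum ▸ hT13l]
        linarith

end KeyLemma

section Final

lemma kConst_le (α : ℝ) (hα : Irrational α)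
    (hpat : ∃ᶠ n in atTop,
      cfDigit α n = 1 ∧ cfDigit α (n + 1) = 1 ∧ cfDigit α (n + 2) = 3 ∧
      cfDigit α (n + 3) = 1 ∧ cfDigit α (n + 4) = 1 ∧ cfDigit α (n + 5) = 1 ∧
      cfDigit α (n + 6) = 3) :
    kConst α ≤ 4 / ((Real.sqrt 21 + 1)/10 + (Real.sqrt 21 + 4575)/1258) := by
  have hfreq : ∃ᶠ t : ℝ in atTop,
      t * psi2 α t ≤ 4 / ((Real.sqrt 21 + 1)/10 + (Real.sqrt 21 + 4575)/1258) := by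
    rw [Filter.frequently_atTop]
    intro T
    obtain ⟨n, hn, c0, c1, c2, c3, c4, c5, c6⟩ :=
      Filter.frequently_atTop.mp hpat (⌈T⌉₊ + 4)
    have hn4 : 4 ≤ n := by omega
    obtain ⟨t, ht1, ht2⟩ := key hα (n - 4)
      (by rw [show n-4+4 = n from by omega]; exact c0)
      (by rw [show n-4+5 = n+1 from by omega]; exact c1)
      (by rw [show n-4+6 = n+2 from by omega]; exact c2)
      (by rw [show n-4+7 = n+3 from by omega]; exact c3)
      (by rw [show n-4+8 = n+4 from by omega]; exact c4)
      (by rw [show n-4+9 = n+5 from by omega]; exact c5)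
      (by rw [show n-4+10 = n+6 from by omega]; exact c6)
    refine ⟨t, ?_, ht2⟩
    have h1 : T ≤ (⌈T⌉₊ : ℝ) := Nat.le_ceil T
    have h2 : ((⌈T⌉₊ : ℕ) : ℝ) ≤ ((n - 4 : ℕ) : ℝ) := by
      exact_mod_cast (by omega : ⌈T⌉₊ ≤ n - 4)
    linarith
  have hbdd : Filter.IsBoundedUnder (· ≥ ·) atTop (fun t : ℝ => t * psi2 α t) := by
    refine ⟨0, ?_⟩
    rw [Filter.eventually_map]
    filter_upwards [Filter.eventually_ge_atTop (0:ℝ)] with t ht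
    exact mul_nonneg ht (psi2_nonneg (α := α) t)
  exact Filter.liminf_le_of_frequently_le hfreq hbdd

end Final

/-- If `α` is irrational, not equivalent to `(1+√5)/2`, and contains the pattern
`1, 1, 3, 1, 1, 1, 3` for infinitely many positions, then
`𝔨(α) ≤ 4/((√21+1)/10 + (√21+4575)/1258)`; in particular `𝔨(α) < 164/(13√173)`. -/
theorem stmt_18 (α : ℝ) (hα : Irrational α)
    (h5 : ¬ CFEquiv α ((1 + Real.sqrt 5) / 2))
    (hpat : ∃ᶠ n in atTop,
      cfDigit α n = 1 ∧ cfDigit α (n + 1) = 1 ∧ cfDigit α (n + 2) = 3 ∧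
      cfDigit α (n + 3) = 1 ∧ cfDigit α (n + 4) = 1 ∧ cfDigit α (n + 5) = 1 ∧
      cfDigit α (n + 6) = 3) :
    kConst α ≤ 4 / ((Real.sqrt 21 + 1) / 10 + (Real.sqrt 21 + 4575) / 1258) ∧
    kConst α < 164 / (13 * Real.sqrt 173) := by
  have h1 := kConst_le α hα hpat
  refine ⟨h1, lt_of_le_of_lt h1 ?_⟩
  have hsl : (4.582:ℝ) < Real.sqrt 21 := sqrt21_gt
  have hsu : Real.sqrt 21 < 4.583 := sqrt21_lt
  have h173l : (13.152:ℝ) < Real.sqrt 173 := sqrt173_gt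
  have h173u : Real.sqrt 173 < 13.154 := sqrt173_lt
  have hW0 : 0 < (Real.sqrt 21 + 1)/10 + (Real.sqrt 21 + 4575)/1258 := by linarith
  rw [div_lt_div_iff₀ hW0 (by linarith : (0:ℝ) < 13 * Real.sqrt 173)]
  nlinarith
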